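/- Let p > 2, q = p/(p-1), and identify ℝ² with ℂ. For f, g ∈ ℂ with ∂_ζ Q the complex Wirtinger-type derivative (∂_ζ = (∂_{ζ₁} - i∂_{ζ₂})/2) of the Nazarov–Treil function Q, one has 2 Re[∂_ζ Q(f,g) · f] ≥ p|f|^p and 2 Re[∂_η Q(f,g) · g] ≥ q|g|^q. -/

import Mathlib

noncomputable section
open Real Matrix

def qexp (p : ℝ) : ℝ := p / (p - 1)

/-- The Nazarov–Treil Bellman function on `ℂ × ℂ ≅ ℝ² × ℝ²`. -/
def Q (p δ : ℝ) (ζ η : ℂ) : ℝ :=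
  if ‖ζ‖ ^ p ≤ ‖η‖ ^ qexp p then
    ‖ζ‖ ^ p + ‖η‖ ^ qexp p +
      δ * (‖ζ‖ ^ (2 : ℝ) * ‖η‖ ^ (2 - qexp p))
  else
    ‖ζ‖ ^ p + ‖η‖ ^ qexp p +
      δ * ((2 / p) * ‖ζ‖ ^ p + (2 / qexp p - 1) * ‖η‖ ^ qexp p)

/-- Coordinate directions in `ℂ ≅ ℝ²`. -/
def dir : Fin 2 → ℂ := ![1, Complex.I]

/-- Partial derivative of `Q` in the `i`-th coordinate of the `ζ` variable. -/
def dζ (p δ : ℝ) (i : Fin 2) (ζ η : ℂ) : ℝ :=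
  deriv (fun t : ℝ => Q p δ (ζ + (t : ℂ) * dir i) η) 0

/-- Partial derivative of `Q` in the `i`-th coordinate of the `η` variable. -/
def dη (p δ : ℝ) (i : Fin 2) (ζ η : ℂ) : ℝ :=
  deriv (fun t : ℝ => Q p δ ζ (η + (t : ℂ) * dir i)) 0

/-- Wirtinger derivative `∂_ζ Q = (∂_{ζ₁}Q - i ∂_{ζ₂}Q)/2`. -/
def Wζ (p δ : ℝ) (ζ η : ℂ) : ℂ :=
  ((dζ p δ 0 ζ η : ℂ) - Complex.I * (dζ p δ 1 ζ η : ℂ)) / 2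

/-- Wirtinger derivative `∂_η Q = (∂_{η₁}Q - i ∂_{η₂}Q)/2`. -/
def Wη (p δ : ℝ) (ζ η : ℂ) : ℂ :=
  ((dη p δ 0 ζ η : ℂ) - Complex.I * (dη p δ 1 ζ η : ℂ)) / 2

/-! ### Auxiliary lemmas -/

lemma sandwich_hasDerivAt {F G H : ℝ → ℝ} {d : ℝ}
    (h1 : ∀ t, F t ≤ G t) (h2 : ∀ t, G t ≤ H t) (h0 : F 0 = H 0)
    (hF : HasDerivAt F d 0) (hH : HasDerivAt H d 0) : HasDerivAt G d 0 := by
  have hG0 : G 0 = F 0 := le_antisymm (h0 ▸ h2 0) (h1 0)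
  rw [hasDerivAt_iff_isLittleO] at hF hH ⊢
  rw [Asymptotics.isLittleO_iff] at hF hH ⊢
  intro c hc
  filter_upwards [hF hc, hH hc] with t hFt hHt
  simp only [smul_eq_mul, sub_zero, Real.norm_eq_abs] at *
  rw [abs_le] at *
  constructor
  · have := h1 t; nlinarith [hFt.1]
  · have := h2 t; nlinarith [hHt.2, h0]

lemma abs_eq_normSq_rpow (z : ℂ) (r : ℝ) :
    ‖z‖ ^ r = Complex.normSq z ^ (r / 2) := by
  rw [Complex.norm_def, Real.sqrt_eq_rpow, ← Real.rpow_mul (Complex.normSq_nonneg z)]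
  ring_nf

lemma normSq_line0 (z : ℂ) (t : ℝ) :
    Complex.normSq (z + (t : ℂ) * 1) = Complex.normSq z + 2 * z.re * t + t ^ 2 := by
  simp [Complex.normSq_apply]; ring

lemma normSq_line1 (z : ℂ) (t : ℝ) :
    Complex.normSq (z + (t : ℂ) * Complex.I) = Complex.normSq z + 2 * z.im * t + t ^ 2 := by
  simp [Complex.normSq_apply]; ring

lemma hasDerivAt_absLine (z e : ℂ) (hz : z ≠ 0) (a r : ℝ)
    (hN : ∀ t : ℝ, Complex.normSq (z + (t : ℂ) * e) = Complex.normSq z + 2 * a * t + t ^ 2) :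
    HasDerivAt (fun t : ℝ => ‖z + (t : ℂ) * e‖ ^ r)
      (r * a * ‖z‖ ^ (r - 2)) 0 := by
  have hns : Complex.normSq z ≠ 0 := by simpa using hz
  have h2 : HasDerivAt (fun t : ℝ => t ^ 2) (0 : ℝ) 0 := by
    simpa using hasDerivAt_pow 2 (0 : ℝ)
  have h1 : HasDerivAt (fun t : ℝ => Complex.normSq z + 2 * a * t + t ^ 2) (2 * a) 0 := by
    refine ((((hasDerivAt_id (0 : ℝ)).const_mul (2 * a)).const_add (Complex.normSq z)).add h2).congr_deriv ?_
    simp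
  have h3 := h1.rpow_const (p := r / 2) (Or.inl (by simpa using hns))
  have heq : (fun t : ℝ => ‖z + (t : ℂ) * e‖ ^ r)
      = fun t : ℝ => (Complex.normSq z + 2 * a * t + t ^ 2) ^ (r / 2) := by
    funext t; rw [abs_eq_normSq_rpow, hN t]
  rw [heq]
  convert h3 using 1
  rw [abs_eq_normSq_rpow]
  have he : (r - 2) / 2 = r / 2 - 1 := by ring
  rw [he]
  have h4 : Complex.normSq z + 2 * a * 0 + 0 ^ 2 = Complex.normSq z := by ring
  rw [h4]; ring

section facts
variable {p : ℝ} (hp : 2 < p)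
include hp

lemma hq1 : 1 < qexp p := by
  rw [qexp, lt_div_iff₀ (by linarith)]; linarith

lemma hq2 : qexp p < 2 := by
  rw [qexp, div_lt_iff₀ (by linarith)]; linarith

lemma hq_pos : 0 < qexp p := lt_trans one_pos (hq1 hp)

lemma hconj : p⁻¹ + (qexp p)⁻¹ = 1 := by
  rw [qexp]; field_simp; ring
end facts

def QA (p δ : ℝ) (ζ η : ℂ) : ℝ :=
  ‖ζ‖ ^ p + ‖η‖ ^ qexp p +
    δ * (‖ζ‖ ^ (2 : ℝ) * ‖η‖ ^ (2 - qexp p))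

def QB (p δ : ℝ) (ζ η : ℂ) : ℝ :=
  ‖ζ‖ ^ p + ‖η‖ ^ qexp p +
    δ * ((2 / p) * ‖ζ‖ ^ p + (2 / qexp p - 1) * ‖η‖ ^ qexp p)

lemma Q_eq_ite (p δ : ℝ) (ζ η : ℂ) : Q p δ ζ η =
    if ‖ζ‖ ^ p ≤ ‖η‖ ^ qexp p then QA p δ ζ η else QB p δ ζ η := rfl

lemma young_core {p : ℝ} (hp : 2 < p) (ζ η : ℂ) :
    ‖ζ‖ ^ (2:ℝ) * ‖η‖ ^ (2 - qexp p) ≤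
      (2 / p) * ‖ζ‖ ^ p + (2 / qexp p - 1) * ‖η‖ ^ qexp p := by
  set q := qexp p with hq
  have hq1' : 1 < q := hq1 hp
  have hq2' : q < 2 := hq2 hp
  have hcj : Real.HolderConjugate (p/2) (p/(p-2)) := by
    have hp2 : p - 2 ≠ 0 := by linarith
    constructor
    · rw [qexp] at *
      field_simp
      ring
    · linarith
    · have : 0 < p - 2 := by linarith
      positivity
  have hY := Real.young_inequality_of_nonneg
    (a := ‖ζ‖ ^ (2:ℝ)) (b := ‖η‖ ^ (2 - q))
    (by positivity) (by positivity) hcj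
  have e1 : (‖ζ‖ ^ (2:ℝ)) ^ (p/2) = ‖ζ‖ ^ p := by
    rw [← Real.rpow_mul (norm_nonneg _)]
    congr 1; ring
  have e2 : (‖η‖ ^ (2 - q)) ^ (p/(p-2)) = ‖η‖ ^ q := by
    rw [← Real.rpow_mul (norm_nonneg _)]
    congr 1
    rw [hq, qexp] at *
    have h1 : p - 1 ≠ 0 := by linarith
    have h3 : p - 2 ≠ 0 := by linarith
    field_simp
    ring
  rw [e1, e2] at hY
  have e3 : ‖ζ‖ ^ p / (p/2) = (2/p) * ‖ζ‖ ^ p := by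
    field_simp
  have e4 : ‖η‖ ^ q / (p/(p-2)) = (2/q - 1) * ‖η‖ ^ q := by
    rw [hq, qexp]
    have h1 : p - 1 ≠ 0 := by linarith
    have h2 : p ≠ 0 := by linarith
    have h3 : p - 2 ≠ 0 := by linarith
    field_simp
    ring
  rw [e3, e4] at hY
  exact hY

lemma QA_le_QB {p δ : ℝ} (hp : 2 < p) (hδ : 0 < δ) (ζ η : ℂ) : QA p δ ζ η ≤ QB p δ ζ η := by
  have := young_core hp ζ η
  have h2 := mul_le_mul_of_nonneg_left this hδ.le
  unfold QA QB
  linarith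

lemma QA_le_Q {p δ : ℝ} (hp : 2 < p) (hδ : 0 < δ) (ζ η : ℂ) : QA p δ ζ η ≤ Q p δ ζ η := by
  rw [Q_eq_ite]; split_ifs with h
  · exact le_refl _
  · exact QA_le_QB hp hδ ζ η

lemma Q_le_QB {p δ : ℝ} (hp : 2 < p) (hδ : 0 < δ) (ζ η : ℂ) : Q p δ ζ η ≤ QB p δ ζ η := by
  rw [Q_eq_ite]; split_ifs with h
  · exact QA_le_QB hp hδ ζ η
  · exact le_refl _

lemma boundary_transfer {p : ℝ} (hp : 2 < p) {ζ η : ℂ}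
    (hb : ‖ζ‖ ^ p = ‖η‖ ^ qexp p) (u v : ℝ)
    (huv : p / qexp p * u = v) :
    ‖η‖ ^ u = ‖ζ‖ ^ v := by
  have hqpos : 0 < qexp p := hq_pos hp
  have hη : ‖η‖ = ‖ζ‖ ^ (p / qexp p) := by
    have h1 : (‖η‖ ^ qexp p) ^ (qexp p)⁻¹ = ‖η‖ :=
      Real.rpow_rpow_inv (norm_nonneg _) hqpos.ne'
    rw [← h1, ← hb, ← Real.rpow_mul (norm_nonneg _), div_eq_mul_inv]
  rw [hη, ← Real.rpow_mul (norm_nonneg _), huv]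

lemma boundary_transfer' {p : ℝ} (hp : 2 < p) {ζ η : ℂ}
    (hb : ‖ζ‖ ^ p = ‖η‖ ^ qexp p) (u v : ℝ)
    (huv : qexp p / p * u = v) :
    ‖ζ‖ ^ u = ‖η‖ ^ v := by
  have hppos : (0:ℝ) < p := by linarith
  have hζ : ‖ζ‖ = ‖η‖ ^ (qexp p / p) := by
    have h1 : (‖ζ‖ ^ p) ^ p⁻¹ = ‖ζ‖ :=
      Real.rpow_rpow_inv (norm_nonneg _) hppos.ne'
    rw [← h1, hb, ← Real.rpow_mul (norm_nonneg _), div_eq_mul_inv]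
  rw [hζ, ← Real.rpow_mul (norm_nonneg _), huv]

lemma QA_eq_QB_boundary {p δ : ℝ} (hp : 2 < p) {ζ η : ℂ}
    (hb : ‖ζ‖ ^ p = ‖η‖ ^ qexp p) : QA p δ ζ η = QB p δ ζ η := by
  have hppos : (0:ℝ) < p := by linarith
  have hq1' : 1 < qexp p := hq1 hp
  have hq2' : qexp p < 2 := hq2 hp
  by_cases hζ : ζ = 0
  · subst hζ
    have h0 : ‖η‖ ^ qexp p = 0 := by
      rw [← hb]; simp [Real.zero_rpow hppos.ne']
    have hη : ‖η‖ = 0 := by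
      by_contra h
      exact absurd h0 (by positivity)
    unfold QA QB
    rw [hη]
    simp [Real.zero_rpow hppos.ne', Real.zero_rpow (by linarith : qexp p ≠ 0),
      Real.zero_rpow (by linarith : (2:ℝ) - qexp p ≠ 0),
      Real.zero_rpow (by norm_num : (2:ℝ) ≠ 0)]
  · have hfpos : 0 < ‖ζ‖ := norm_pos_iff.mpr hζ
    have htr : ‖η‖ ^ (2 - qexp p) = ‖ζ‖ ^ (p - 2) := by
      apply boundary_transfer hp hb
      rw [qexp]
      have h1 : p - 1 ≠ 0 := by linarith
      field_simp
      ring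
    unfold QA QB
    rw [htr]
    have e1 : ‖ζ‖ ^ (2:ℝ) * ‖ζ‖ ^ (p - 2) = ‖ζ‖ ^ p := by
      rw [← Real.rpow_add hfpos]; congr 1; ring
    rw [e1, ← hb]
    have hc := hconj hp
    have e2 : 2/p + (2/qexp p - 1) = 1 := by
      rw [div_eq_mul_inv, div_eq_mul_inv]; linarith
    linear_combination (-(δ * ‖ζ‖ ^ p)) * e2

/-! ### Derivative of `Q` in the `ζ` direction -/

lemma dζ_spec {p δ : ℝ} (hp : 2 < p) (hδ : 0 < δ) (f g : ℂ) (hf : f ≠ 0) :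
    ∃ K : ℝ, p * ‖f‖ ^ (p - 2) ≤ K ∧
      HasDerivAt (fun t : ℝ => Q p δ (f + (t:ℂ) * 1) g) (f.re * K) 0 ∧
      HasDerivAt (fun t : ℝ => Q p δ (f + (t:ℂ) * Complex.I) g) (f.im * K) 0 := by
  have hppos : (0:ℝ) < p := by linarith
  have hpne : p ≠ 0 := hppos.ne'
  have hq1' : 1 < qexp p := hq1 hp
  have hq2' : qexp p < 2 := hq2 hp
  have hfpos : 0 < ‖f‖ := norm_pos_iff.mpr hf
  have hbranch : ∀ (e : ℂ) (a : ℝ),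
      (∀ t : ℝ, Complex.normSq (f + (t:ℂ)*e) = Complex.normSq f + 2*a*t + t^2) →
      HasDerivAt (fun t : ℝ => QA p δ (f + (t:ℂ)*e) g)
        (a * (p * ‖f‖ ^ (p-2) + 2*δ* ‖g‖ ^ (2 - qexp p))) 0 ∧
      HasDerivAt (fun t : ℝ => QB p δ (f + (t:ℂ)*e) g)
        (a * ((p + 2*δ) * ‖f‖ ^ (p-2))) 0 := by
    intro e a hN
    have hP := hasDerivAt_absLine f e hf a p hN
    have h2 := hasDerivAt_absLine f e hf a 2 hN
    constructor
    · have hA := (hP.add_const (‖g‖ ^ qexp p)).add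
        ((h2.mul_const (‖g‖ ^ (2 - qexp p))).const_mul δ)
      unfold QA
      refine hA.congr_deriv ?_
      rw [show (2:ℝ) - 2 = 0 by ring, Real.rpow_zero]
      ring
    · have hB := (hP.add_const (‖g‖ ^ qexp p)).add
        (((hP.const_mul (2/p)).add_const ((2/qexp p - 1) * ‖g‖ ^ qexp p)).const_mul δ)
      unfold QB
      refine hB.congr_deriv ?_
      field_simp
  rcases lt_trichotomy (‖f‖ ^ p) (‖g‖ ^ qexp p) with hlt | heqb | hgt
  · -- strictly inside region A
    have main : ∀ (e : ℂ) (a : ℝ),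
        (∀ t : ℝ, Complex.normSq (f + (t:ℂ)*e) = Complex.normSq f + 2*a*t + t^2) →
        HasDerivAt (fun t : ℝ => Q p δ (f + (t:ℂ)*e) g)
          (a * (p * ‖f‖ ^ (p-2) + 2*δ* ‖g‖ ^ (2 - qexp p))) 0 := by
      intro e a hN
      have hcv := (hbranch e a hN).1
      have hcp := hasDerivAt_absLine f e hf a p hN
      have h00 : ‖f + ((0:ℝ):ℂ)*e‖ ^ p < ‖g‖ ^ qexp p := by
        simpa using hlt
      have hev : ∀ᶠ t : ℝ in nhds 0,
          ‖f + (t:ℂ)*e‖ ^ p < ‖g‖ ^ qexp p :=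
        Filter.Tendsto.eventually_lt_const h00 hcp.continuousAt
      refine hcv.congr_of_eventuallyEq ?_
      filter_upwards [hev] with t ht
      rw [Q_eq_ite, if_pos ht.le]
    refine ⟨_, ?_, main 1 f.re (normSq_line0 f), main Complex.I f.im (normSq_line1 f)⟩
    have : (0:ℝ) ≤ 2*δ* ‖g‖ ^ (2 - qexp p) := by positivity
    linarith
  · -- boundary
    have htr : ‖g‖ ^ (2 - qexp p) = ‖f‖ ^ (p - 2) := by
      apply boundary_transfer hp heqb
      rw [qexp]
      have h1 : p - 1 ≠ 0 := by linarith
      field_simp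
      ring
    have main : ∀ (e : ℂ) (a : ℝ),
        (∀ t : ℝ, Complex.normSq (f + (t:ℂ)*e) = Complex.normSq f + 2*a*t + t^2) →
        HasDerivAt (fun t : ℝ => Q p δ (f + (t:ℂ)*e) g)
          (a * ((p + 2*δ) * ‖f‖ ^ (p-2))) 0 := by
      intro e a hN
      obtain ⟨hA, hB⟩ := hbranch e a hN
      rw [htr] at hA
      have hA' : HasDerivAt (fun t : ℝ => QA p δ (f + (t:ℂ)*e) g)
          (a * ((p + 2*δ) * ‖f‖ ^ (p-2))) 0 := by
        convert hA using 1; ring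
      exact sandwich_hasDerivAt (fun t => QA_le_Q hp hδ _ _) (fun t => Q_le_QB hp hδ _ _)
        (by simpa using QA_eq_QB_boundary (δ := δ) hp heqb) hA' hB
    refine ⟨_, ?_, main 1 f.re (normSq_line0 f), main Complex.I f.im (normSq_line1 f)⟩
    have : (0:ℝ) ≤ 2*δ* ‖f‖ ^ (p-2) := by positivity
    nlinarith
  · -- strictly inside region B
    have main : ∀ (e : ℂ) (a : ℝ),
        (∀ t : ℝ, Complex.normSq (f + (t:ℂ)*e) = Complex.normSq f + 2*a*t + t^2) →
        HasDerivAt (fun t : ℝ => Q p δ (f + (t:ℂ)*e) g)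
          (a * ((p + 2*δ) * ‖f‖ ^ (p-2))) 0 := by
      intro e a hN
      have hcv := (hbranch e a hN).2
      have hcp := hasDerivAt_absLine f e hf a p hN
      have h00 : ‖g‖ ^ qexp p < ‖f + ((0:ℝ):ℂ)*e‖ ^ p := by
        simpa using hgt
      have hev : ∀ᶠ t : ℝ in nhds 0,
          ‖g‖ ^ qexp p < ‖f + (t:ℂ)*e‖ ^ p :=
        Filter.Tendsto.eventually_const_lt h00 hcp.continuousAt
      refine hcv.congr_of_eventuallyEq ?_
      filter_upwards [hev] with t ht
      rw [Q_eq_ite, if_neg (not_le.2 ht)]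
    refine ⟨_, ?_, main 1 f.re (normSq_line0 f), main Complex.I f.im (normSq_line1 f)⟩
    have : (0:ℝ) ≤ 2*δ* ‖f‖ ^ (p-2) := by positivity
    nlinarith

/-! ### Derivative of `Q` in the `η` direction -/

lemma dη_spec {p δ : ℝ} (hp : 2 < p) (hδ : 0 < δ) (f g : ℂ) (hg : g ≠ 0) :
    ∃ K : ℝ, qexp p * ‖g‖ ^ (qexp p - 2) ≤ K ∧
      HasDerivAt (fun t : ℝ => Q p δ f (g + (t:ℂ) * 1)) (g.re * K) 0 ∧
      HasDerivAt (fun t : ℝ => Q p δ f (g + (t:ℂ) * Complex.I)) (g.im * K) 0 := by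
  have hppos : (0:ℝ) < p := by linarith
  have hq1' : 1 < qexp p := hq1 hp
  have hq2' : qexp p < 2 := hq2 hp
  have hqne : qexp p ≠ 0 := by linarith
  have hgpos : 0 < ‖g‖ := norm_pos_iff.mpr hg
  have hbranch : ∀ (e : ℂ) (b : ℝ),
      (∀ t : ℝ, Complex.normSq (g + (t:ℂ)*e) = Complex.normSq g + 2*b*t + t^2) →
      HasDerivAt (fun t : ℝ => QA p δ f (g + (t:ℂ)*e))
        (b * (qexp p * ‖g‖ ^ (qexp p - 2) +
          δ * (2 - qexp p) * ‖f‖ ^ (2:ℝ) * ‖g‖ ^ (2 - qexp p - 2))) 0 ∧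
      HasDerivAt (fun t : ℝ => QB p δ f (g + (t:ℂ)*e))
        (b * ((qexp p + δ * (2 - qexp p)) * ‖g‖ ^ (qexp p - 2))) 0 := by
    intro e b hN
    have hQ := hasDerivAt_absLine g e hg b (qexp p) hN
    have h2q := hasDerivAt_absLine g e hg b (2 - qexp p) hN
    constructor
    · have hA := (hQ.const_add (‖f‖ ^ p)).add
        ((h2q.const_mul (‖f‖ ^ (2:ℝ))).const_mul δ)
      unfold QA
      refine hA.congr_deriv ?_
      ring
    · have hB := (hQ.const_add (‖f‖ ^ p)).add
        (((hQ.const_mul (2/qexp p - 1)).const_add ((2/p) * ‖f‖ ^ p)).const_mul δ)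
      unfold QB
      refine hB.congr_deriv ?_
      field_simp
  rcases lt_trichotomy (‖f‖ ^ p) (‖g‖ ^ qexp p) with hlt | heqb | hgt
  · have main : ∀ (e : ℂ) (b : ℝ),
        (∀ t : ℝ, Complex.normSq (g + (t:ℂ)*e) = Complex.normSq g + 2*b*t + t^2) →
        HasDerivAt (fun t : ℝ => Q p δ f (g + (t:ℂ)*e))
          (b * (qexp p * ‖g‖ ^ (qexp p - 2) +
            δ * (2 - qexp p) * ‖f‖ ^ (2:ℝ) * ‖g‖ ^ (2 - qexp p - 2))) 0 := by
      intro e b hN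
      have hcv := (hbranch e b hN).1
      have hcp := hasDerivAt_absLine g e hg b (qexp p) hN
      have h00 : ‖f‖ ^ p < ‖g + ((0:ℝ):ℂ)*e‖ ^ qexp p := by
        simpa using hlt
      have hev : ∀ᶠ t : ℝ in nhds 0,
          ‖f‖ ^ p < ‖g + (t:ℂ)*e‖ ^ qexp p :=
        Filter.Tendsto.eventually_const_lt h00 hcp.continuousAt
      refine hcv.congr_of_eventuallyEq ?_
      filter_upwards [hev] with t ht
      rw [Q_eq_ite, if_pos ht.le]
    refine ⟨_, ?_, main 1 g.re (normSq_line0 g), main Complex.I g.im (normSq_line1 g)⟩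
    have h1 : (0:ℝ) ≤ δ * (2 - qexp p) * ‖f‖ ^ (2:ℝ) *
        ‖g‖ ^ (2 - qexp p - 2) := by
      have : (0:ℝ) < 2 - qexp p := by linarith
      positivity
    linarith
  · -- boundary
    have htr : ‖f‖ ^ (2:ℝ) = ‖g‖ ^ (2 * qexp p - 2) := by
      apply boundary_transfer' hp heqb
      rw [qexp]
      have h1 : p - 1 ≠ 0 := by linarith
      field_simp
      ring
    have hcomb : ‖g‖ ^ (2 * qexp p - 2) * ‖g‖ ^ (2 - qexp p - 2)
        = ‖g‖ ^ (qexp p - 2) := by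
      rw [← Real.rpow_add hgpos]; congr 1; ring
    have main : ∀ (e : ℂ) (b : ℝ),
        (∀ t : ℝ, Complex.normSq (g + (t:ℂ)*e) = Complex.normSq g + 2*b*t + t^2) →
        HasDerivAt (fun t : ℝ => Q p δ f (g + (t:ℂ)*e))
          (b * ((qexp p + δ * (2 - qexp p)) * ‖g‖ ^ (qexp p - 2))) 0 := by
      intro e b hN
      obtain ⟨hA, hB⟩ := hbranch e b hN
      rw [htr] at hA
      have hA' : HasDerivAt (fun t : ℝ => QA p δ f (g + (t:ℂ)*e))
          (b * ((qexp p + δ * (2 - qexp p)) * ‖g‖ ^ (qexp p - 2))) 0 := by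
        convert hA using 1
        rw [show δ * (2 - qexp p) * ‖g‖ ^ (2 * qexp p - 2) *
            ‖g‖ ^ (2 - qexp p - 2)
            = δ * (2 - qexp p) * (‖g‖ ^ (2 * qexp p - 2) *
              ‖g‖ ^ (2 - qexp p - 2)) by ring, hcomb]
        ring
      exact sandwich_hasDerivAt (fun t => QA_le_Q hp hδ _ _) (fun t => Q_le_QB hp hδ _ _)
        (by simpa using QA_eq_QB_boundary (δ := δ) hp heqb) hA' hB
    refine ⟨_, ?_, main 1 g.re (normSq_line0 g), main Complex.I g.im (normSq_line1 g)⟩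
    have h1 : (0:ℝ) ≤ δ * (2 - qexp p) * ‖g‖ ^ (qexp p - 2) := by
      have : (0:ℝ) < 2 - qexp p := by linarith
      positivity
    nlinarith
  · have main : ∀ (e : ℂ) (b : ℝ),
        (∀ t : ℝ, Complex.normSq (g + (t:ℂ)*e) = Complex.normSq g + 2*b*t + t^2) →
        HasDerivAt (fun t : ℝ => Q p δ f (g + (t:ℂ)*e))
          (b * ((qexp p + δ * (2 - qexp p)) * ‖g‖ ^ (qexp p - 2))) 0 := by
      intro e b hN
      have hcv := (hbranch e b hN).2
      have hcp := hasDerivAt_absLine g e hg b (qexp p) hN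
      have h00 : ‖g + ((0:ℝ):ℂ)*e‖ ^ qexp p < ‖f‖ ^ p := by
        simpa using hgt
      have hev : ∀ᶠ t : ℝ in nhds 0,
          ‖g + (t:ℂ)*e‖ ^ qexp p < ‖f‖ ^ p :=
        Filter.Tendsto.eventually_lt_const h00 hcp.continuousAt
      refine hcv.congr_of_eventuallyEq ?_
      filter_upwards [hev] with t ht
      rw [Q_eq_ite, if_neg (not_le.2 ht)]
    refine ⟨_, ?_, main 1 g.re (normSq_line0 g), main Complex.I g.im (normSq_line1 g)⟩
    have h1 : (0:ℝ) ≤ δ * (2 - qexp p) * ‖g‖ ^ (qexp p - 2) := by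
      have : (0:ℝ) < 2 - qexp p := by linarith
      positivity
    nlinarith

lemma two_re_aux (d0 d1 : ℝ) (f : ℂ) :
    2 * ((((d0:ℂ) - Complex.I * (d1:ℂ)) / 2) * f).re = d0 * f.re + d1 * f.im := by
  simp [Complex.div_re, Complex.mul_re, Complex.mul_im, Complex.normSq_apply]
  ring

lemma abs_rpow_two (z : ℂ) : ‖z‖ ^ (2:ℝ) = z.re * z.re + z.im * z.im := by
  rw [abs_eq_normSq_rpow]
  norm_num [Complex.normSq_apply]

theorem stmt9 (p δ : ℝ) (hp : 2 < p) (hδ : 0 < δ) (f g : ℂ) :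
    p * ‖f‖ ^ p ≤ 2 * (Wζ p δ f g * f).re ∧
    qexp p * ‖g‖ ^ qexp p ≤ 2 * (Wη p δ f g * g).re := by
  have hppos : (0:ℝ) < p := by linarith
  have hq1' : 1 < qexp p := hq1 hp
  constructor
  · by_cases hf : f = 0
    · subst hf
      simp [Real.zero_rpow hppos.ne']
    · obtain ⟨K, hK, h0, h1⟩ := dζ_spec hp hδ f g hf
      have hfpos : 0 < ‖f‖ := norm_pos_iff.mpr hf
      have e0 : dζ p δ 0 f g = f.re * K := by
        have hd : dir 0 = 1 := by simp [dir]
        rw [dζ, hd]; exact h0.deriv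
      have e1 : dζ p δ 1 f g = f.im * K := by
        have hd : dir 1 = Complex.I := by simp [dir]
        rw [dζ, hd]; exact h1.deriv
      have hw : 2 * (Wζ p δ f g * f).re = dζ p δ 0 f g * f.re + dζ p δ 1 f g * f.im := by
        rw [Wζ]; exact two_re_aux _ _ f
      rw [hw, e0, e1]
      have hsplit : ‖f‖ ^ p = ‖f‖ ^ (p - 2) * ‖f‖ ^ (2:ℝ) := by
        rw [← Real.rpow_add hfpos]; congr 1; ring
      have h2 : (0:ℝ) ≤ ‖f‖ ^ (2:ℝ) := by positivity
      calc p * ‖f‖ ^ p = (p * ‖f‖ ^ (p-2)) * ‖f‖ ^ (2:ℝ) := by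
            rw [hsplit]; ring
        _ ≤ K * ‖f‖ ^ (2:ℝ) := mul_le_mul_of_nonneg_right hK h2
        _ = f.re * K * f.re + f.im * K * f.im := by rw [abs_rpow_two]; ring
  · by_cases hg : g = 0
    · subst hg
      simp [Real.zero_rpow (by linarith : qexp p ≠ 0)]
    · obtain ⟨K, hK, h0, h1⟩ := dη_spec hp hδ f g hg
      have hgpos : 0 < ‖g‖ := norm_pos_iff.mpr hg
      have e0 : dη p δ 0 f g = g.re * K := by
        have hd : dir 0 = 1 := by simp [dir]
        rw [dη, hd]; exact h0.deriv
      have e1 : dη p δ 1 f g = g.im * K := by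
        have hd : dir 1 = Complex.I := by simp [dir]
        rw [dη, hd]; exact h1.deriv
      have hw : 2 * (Wη p δ f g * g).re = dη p δ 0 f g * g.re + dη p δ 1 f g * g.im := by
        rw [Wη]; exact two_re_aux _ _ g
      rw [hw, e0, e1]
      have hsplit : ‖g‖ ^ qexp p
          = ‖g‖ ^ (qexp p - 2) * ‖g‖ ^ (2:ℝ) := by
        rw [← Real.rpow_add hgpos]; congr 1; ring
      have h2 : (0:ℝ) ≤ ‖g‖ ^ (2:ℝ) := by positivity
      calc qexp p * ‖g‖ ^ qexp p
            = (qexp p * ‖g‖ ^ (qexp p - 2)) * ‖g‖ ^ (2:ℝ) := by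
            rw [hsplit]; ring
        _ ≤ K * ‖g‖ ^ (2:ℝ) := mul_le_mul_of_nonneg_right hK h2
        _ = g.re * K * g.re + g.im * K * g.im := by rw [abs_rpow_two]; ring
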